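/- For 0 < a < b and p ∈ (−1, ∞) \ {0}, H(a,b)^{p+2} ≤ G(a,b)² · L_p(a,b)^p ≤ A(a^{p+2}, b^{p+2}), where H(a,b) = 2ab/(a+b), G(a,b) = √(ab), L_p(a,b) = ((b^{p+1} − a^{p+1})/((p+1)(b−a)))^{1/p}, A(x,y) = (x+y)/2. -/

import Mathlib

open Real Set intervalIntegral

def HarmonicallyConvexOn (I : Set ℝ) (f : ℝ → ℝ) : Prop :=
  ∀ x ∈ I, ∀ y ∈ I, ∀ t ∈ Set.Icc (0:ℝ) 1,
    f (x * y / (t * x + (1 - t) * y)) ≤ t * f y + (1 - t) * f x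

lemma aux_integral_linear (c d u v : ℝ) :
    ∫ t in u..v, (c * t + d) = c * ((v ^ 2 - u ^ 2) / 2) + d * (v - u) := by
  rw [intervalIntegral.integral_add ((by fun_prop : Continuous fun t : ℝ => c * t).intervalIntegrable u v)
      intervalIntegrable_const, intervalIntegral.integral_const_mul, integral_id,
    intervalIntegral.integral_const, smul_eq_mul]
  ring

lemma convexOn_rpow_nonpos {q : ℝ} (hq : q ≤ 0) :
    ConvexOn ℝ (Ioi (0:ℝ)) fun t : ℝ => t ^ q := by
  have hderiv : ∀ x ∈ Ioi (0:ℝ), HasDerivAt (fun t : ℝ => t ^ q) (q * x ^ (q - 1)) x :=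
    fun x hx => Real.hasDerivAt_rpow_const (Or.inl (ne_of_gt hx))
  apply convexOn_of_deriv2_nonneg (convex_Ioi 0)
  · exact fun x hx => ((hderiv x hx).continuousAt).continuousWithinAt
  · rw [interior_Ioi]
    exact fun x hx => ((hderiv x hx).differentiableAt).differentiableWithinAt
  · rw [interior_Ioi]
    intro x hx
    have hev : deriv (fun t : ℝ => t ^ q) =ᶠ[nhds x] fun t : ℝ => q * t ^ (q - 1) := by
      filter_upwards [eventually_gt_nhds hx] with t ht
      exact (hderiv t ht).deriv
    have hd2 : HasDerivAt (fun t : ℝ => q * t ^ (q - 1)) (q * ((q - 1) * x ^ (q - 1 - 1))) x :=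
      (Real.hasDerivAt_rpow_const (Or.inl (ne_of_gt hx))).const_mul q
    exact (hd2.congr_of_eventuallyEq hev).differentiableAt.differentiableWithinAt
  · rw [interior_Ioi]
    intro x hx
    have hev : deriv (fun t : ℝ => t ^ q) =ᶠ[nhds x] fun t : ℝ => q * t ^ (q - 1) := by
      filter_upwards [eventually_gt_nhds hx] with t ht
      exact (hderiv t ht).deriv
    have hd2 : HasDerivAt (fun t : ℝ => q * t ^ (q - 1)) (q * ((q - 1) * x ^ (q - 1 - 1))) x :=
      (Real.hasDerivAt_rpow_const (Or.inl (ne_of_gt hx))).const_mul q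
    have h2 : deriv^[2] (fun t : ℝ => t ^ q) x = q * ((q - 1) * x ^ (q - 1 - 1)) := by
      show deriv (deriv fun t : ℝ => t ^ q) x = _
      rw [hev.deriv_eq]
      exact hd2.deriv
    rw [h2, ← mul_assoc]
    have hxp : (0:ℝ) < x ^ (q - 1 - 1) := Real.rpow_pos_of_pos hx _
    have hqq : (0:ℝ) ≤ q * (q - 1) := by nlinarith
    exact mul_nonneg hqq hxp.le

lemma hh_left {f f' : ℝ → ℝ} {u v : ℝ} (hu : 0 < u) (huv : u < v)
    (hc : ConvexOn ℝ (Ioi 0) f)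
    (hd : ∀ t ∈ Ioi (0:ℝ), HasDerivAt f (f' t) t) :
    f ((u + v) / 2) * (v - u) ≤ ∫ t in u..v, f t := by
  have hv : 0 < v := hu.trans huv
  have hm : (u + v) / 2 ∈ Ioi (0:ℝ) := mem_Ioi.mpr (by linarith)
  set m := (u + v) / 2 with hm_def
  set c := f' m with hc_def
  have tangent : ∀ t ∈ Icc u v, c * t + (f m - c * m) ≤ f t := by
    intro t ht
    have htpos : t ∈ Ioi (0:ℝ) := mem_Ioi.mpr (lt_of_lt_of_le hu ht.1)
    rcases lt_trichotomy t m with h | h | h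
    · have h1 := hc.slope_le_of_hasDerivAt htpos hm h (hd m hm)
      rw [slope_def_field, div_le_iff₀ (by linarith : (0:ℝ) < m - t)] at h1
      linarith
    · rw [h]; linarith
    · have h1 := hc.le_slope_of_hasDerivAt hm htpos h (hd m hm)
      rw [slope_def_field, le_div_iff₀ (by linarith : (0:ℝ) < t - m)] at h1
      linarith
  have hcont : ContinuousOn f (uIcc u v) := by
    intro x hx
    rw [uIcc_of_le huv.le] at hx
    exact (hd x (mem_Ioi.mpr (lt_of_lt_of_le hu hx.1))).continuousAt.continuousWithinAt
  calc f m * (v - u) = ∫ t in u..v, (c * t + (f m - c * m)) := by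
        rw [aux_integral_linear, hm_def]; ring
    _ ≤ ∫ t in u..v, f t := by
        exact intervalIntegral.integral_mono_on huv.le
          (((continuous_const.mul continuous_id').add continuous_const).intervalIntegrable u v)
          hcont.intervalIntegrable tangent

lemma hh_right {f f' : ℝ → ℝ} {u v : ℝ} (hu : 0 < u) (huv : u < v)
    (hc : ConvexOn ℝ (Ioi 0) f)
    (hd : ∀ t ∈ Ioi (0:ℝ), HasDerivAt f (f' t) t) :
    ∫ t in u..v, f t ≤ (f u + f v) / 2 * (v - u) := by
  have hv : 0 < v := hu.trans huv
  have hvu : v - u ≠ 0 := by linarith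
  set c := (f v - f u) / (v - u) with hc_def
  have chord : ∀ t ∈ Icc u v, f t ≤ c * t + (f u - c * u) := by
    intro t ht
    have hkey : (v - t) / (v - u) * u + (t - u) / (v - u) * v = t := by
      field_simp; ring
    have hle := hc.2 (mem_Ioi.mpr hu) (mem_Ioi.mpr hv)
      (div_nonneg (by linarith [ht.2]) (by linarith))
      (div_nonneg (by linarith [ht.1]) (by linarith))
      (by field_simp; ring : (v - t) / (v - u) + (t - u) / (v - u) = 1)
    rw [smul_eq_mul, smul_eq_mul, smul_eq_mul, smul_eq_mul, hkey] at hle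
    have heq : c * t + (f u - c * u) = (v - t) / (v - u) * f u + (t - u) / (v - u) * f v := by
      rw [hc_def]; field_simp; ring
    rw [heq]
    exact hle
  have hcont : ContinuousOn f (uIcc u v) := by
    intro x hx
    rw [uIcc_of_le huv.le] at hx
    exact (hd x (mem_Ioi.mpr (lt_of_lt_of_le hu hx.1))).continuousAt.continuousWithinAt
  calc ∫ t in u..v, f t ≤ ∫ t in u..v, (c * t + (f u - c * u)) := by
        exact intervalIntegral.integral_mono_on huv.le hcont.intervalIntegrable
          (((continuous_const.mul continuous_id').add continuous_const).intervalIntegrable u v)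
          chord
    _ = (f u + f v) / 2 * (v - u) := by
        rw [aux_integral_linear, hc_def]; field_simp; ring

theorem stmt16 (a b p : ℝ) (ha : 0 < a) (hab : a < b) (hp : -1 < p) (hp0 : p ≠ 0) :
    (2 * a * b / (a + b)) ^ (p + 2) ≤
      (Real.sqrt (a * b)) ^ 2 *
        (((b ^ (p + 1) - a ^ (p + 1)) / ((p + 1) * (b - a))) ^ (1 / p)) ^ p ∧
    (Real.sqrt (a * b)) ^ 2 *
        (((b ^ (p + 1) - a ^ (p + 1)) / ((p + 1) * (b - a))) ^ (1 / p)) ^ p ≤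
      (a ^ (p + 2) + b ^ (p + 2)) / 2 := by
  have hb : 0 < b := ha.trans hab
  have hba : (0:ℝ) < b - a := by linarith
  have hp1 : (0:ℝ) < p + 1 := by linarith
  have hab2 : (0:ℝ) < a * b := mul_pos ha hb
  have hD : (0:ℝ) < b ^ (p + 1) - a ^ (p + 1) := by
    have := Real.rpow_lt_rpow ha.le hab hp1
    linarith
  have hY : (0:ℝ) < (b ^ (p + 1) - a ^ (p + 1)) / ((p + 1) * (b - a)) := by positivity
  have hmid : (Real.sqrt (a * b)) ^ 2 *
      (((b ^ (p + 1) - a ^ (p + 1)) / ((p + 1) * (b - a))) ^ (1 / p)) ^ p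
      = a * b * ((b ^ (p + 1) - a ^ (p + 1)) / ((p + 1) * (b - a))) := by
    rw [Real.sq_sqrt hab2.le, ← Real.rpow_mul hY.le, one_div_mul_cancel hp0, Real.rpow_one]
  set q := -(p + 2) with hq_def
  have hq0 : q ≤ 0 := by rw [hq_def]; linarith
  have hconv := convexOn_rpow_nonpos hq0
  have hd : ∀ t ∈ Ioi (0:ℝ), HasDerivAt (fun s : ℝ => s ^ q) (q * t ^ (q - 1)) t :=
    fun t ht => Real.hasDerivAt_rpow_const (Or.inl (ne_of_gt ht))
  have hui : b⁻¹ < a⁻¹ := by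
    rw [show b⁻¹ = 1 / b by ring, show a⁻¹ = 1 / a by ring]
    exact one_div_lt_one_div_of_lt ha hab
  have hbinv : (0:ℝ) < b⁻¹ := by positivity
  have key : ∀ x : ℝ, 0 < x → (x⁻¹ : ℝ) ^ q = x ^ (p + 2) := by
    intro x hx
    rw [hq_def, Real.rpow_neg (inv_nonneg.mpr hx.le), Real.inv_rpow hx.le, inv_inv]
  have key1 : ∀ x : ℝ, 0 < x → (x⁻¹ : ℝ) ^ (q + 1) = x ^ (p + 1) := by
    intro x hx
    rw [show q + 1 = -(p + 1) by rw [hq_def]; ring,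
      Real.rpow_neg (inv_nonneg.mpr hx.le), Real.inv_rpow hx.le, inv_inv]
  have hJ : ∫ t in b⁻¹..a⁻¹, t ^ q
      = (b ^ (p + 1) - a ^ (p + 1)) / (p + 1) := by
    rw [integral_rpow (Or.inr ⟨by rw [hq_def]; intro h; linarith [neg_eq_iff_eq_neg.mp h],
      by rw [Set.uIcc_of_le hui.le]; rintro ⟨h1, -⟩; linarith⟩)]
    rw [key1 a ha, key1 b hb, show q + 1 = -(p + 1) by rw [hq_def]; ring,
      div_neg, ← neg_div, neg_sub]
  have e2 : a⁻¹ - b⁻¹ = (b - a) / (a * b) := by field_simp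
  have emid : (b⁻¹ + a⁻¹) / 2 = (2 * a * b / (a + b))⁻¹ := by
    apply eq_inv_of_mul_eq_one_right
    field_simp
  have e1 : ((b⁻¹ + a⁻¹) / 2) ^ q = (2 * a * b / (a + b)) ^ (p + 2) := by
    rw [emid]
    exact key _ (by positivity)
  constructor
  · have HL := hh_left (f := fun s : ℝ => s ^ q) (f' := fun t => q * t ^ (q - 1))
      hbinv hui hconv hd
    rw [hJ, e1, e2] at HL
    -- HL : G * ((b-a)/(a*b)) ≤ D/(p+1)
    rw [hmid, mul_div_assoc', le_div_iff₀ (by positivity)]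
    have hmul := mul_le_mul_of_nonneg_left HL (le_of_lt (mul_pos hab2 hp1))
    have l : a * b * (p + 1) * ((2 * a * b / (a + b)) ^ (p + 2) * ((b - a) / (a * b)))
        = (2 * a * b / (a + b)) ^ (p + 2) * ((p + 1) * (b - a)) := by
      field_simp
    have r : a * b * (p + 1) * ((b ^ (p + 1) - a ^ (p + 1)) / (p + 1))
        = a * b * (b ^ (p + 1) - a ^ (p + 1)) := by
      field_simp
    rw [l, r] at hmul
    linarith
  · have HR := hh_right (f := fun s : ℝ => s ^ q) (f' := fun t => q * t ^ (q - 1))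
      hbinv hui hconv hd
    rw [hJ, e2, key a ha, key b hb] at HR
    -- HR : D/(p+1) ≤ (b^(p+2)+a^(p+2))/2 * ((b-a)/(a*b))
    rw [hmid, mul_div_assoc', div_le_iff₀ (by positivity)]
    have hmul := mul_le_mul_of_nonneg_left HR (le_of_lt (mul_pos hab2 hp1))
    have l : a * b * (p + 1) * ((b ^ (p + 1) - a ^ (p + 1)) / (p + 1))
        = a * b * (b ^ (p + 1) - a ^ (p + 1)) := by
      field_simp
    have r : a * b * (p + 1) * ((b ^ (p + 2) + a ^ (p + 2)) / 2 * ((b - a) / (a * b)))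
        = (a ^ (p + 2) + b ^ (p + 2)) / 2 * ((p + 1) * (b - a)) := by
      field_simp; ring
    rw [l, r] at hmul
    linarith
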